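/- If C ⊆ V is a Φ_c-valid control set and i ∈ C is a vertex such that n_{i,1}(1_C) ≥ n_{i,0}(1_C), then C ∖ {i} is also a Φ_c-valid control set. -/

import Mathlib

open Finset

variable {V : Type*}

/-- Agreement of a configuration on an (unordered) edge. -/
def agreeFun (x : V → Bool) : Sym2 V → Bool :=
  Sym2.lift ⟨fun a b => x a == x b, fun a b => by show (x a == x b) = (x b == x a); cases x a <;> cases x b <;> rfl⟩

/-- The potential of the majority game: number of edges whose endpoints agree. -/
def Phi [Fintype V] [DecidableEq V] (G : SimpleGraph V) [DecidableRel G.Adj]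
    (x : V → Bool) : ℕ :=
  (G.edgeFinset.filter (fun e => agreeFun x e = true)).card

/-- Number of neighbors of `i` playing action `a` in configuration `x`. -/
def nCount [Fintype V] (G : SimpleGraph V) [DecidableRel G.Adj]
    (x : V → Bool) (i : V) (a : Bool) : ℕ :=
  ((G.neighborFinset i).filter (fun j => x j = a)).card

/-- Majority-game utility: number of neighbors agreeing with `i`. -/
def lamC [Fintype V] (G : SimpleGraph V) [DecidableRel G.Adj]
    (x : V → Bool) (i : V) : ℕ :=
  ((G.neighborFinset i).filter (fun j => x j = x i)).card

/-- Minority-game utility: number of neighbors disagreeing with `i`. -/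
def lamA [Fintype V] (G : SimpleGraph V) [DecidableRel G.Adj]
    (x : V → Bool) (i : V) : ℕ :=
  ((G.neighborFinset i).filter (fun j => x j ≠ x i)).card

/-- `x` is a Nash equilibrium of the minority game. -/
def MinorityNE [Fintype V] [DecidableEq V] (G : SimpleGraph V) [DecidableRel G.Adj]
    (x : V → Bool) : Prop :=
  ∀ (i : V) (a : Bool), lamA G (Function.update x i a) i ≤ lamA G x i

/-- A monotone crusade from `C`: starts at the indicator of `C`, ends at all-ones,
and at each step one coordinate outside `C` is flipped from `0` to `1`. -/
def IsCrusade [DecidableEq V] (C : Finset V) (m : ℕ) (xs : ℕ → V → Bool) : Prop :=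
  xs 0 = (fun v => decide (v ∈ C)) ∧ xs m = (fun _ => true) ∧
    ∀ k < m, ∃ i, i ∉ C ∧ xs k i = false ∧ xs (k + 1) = Function.update (xs k) i true

/-- `C` is a `Φ_c`-valid control set: there is a `Φ_c`-adapted monotone crusade from `C`. -/
def ValidControlSet [Fintype V] [DecidableEq V] (G : SimpleGraph V) [DecidableRel G.Adj]
    (C : Finset V) : Prop :=
  ∃ m xs, IsCrusade C m xs ∧ ∀ k < m, Phi G (xs k) ≤ Phi G (xs (k + 1))

/-- `x ∈ Z`: reachable from the all-ones configuration by allowed down-flips. -/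
def InZ [Fintype V] [DecidableEq V] (G : SimpleGraph V) [DecidableRel G.Adj]
    (x : V → Bool) : Prop :=
  ∃ m, ∃ ys : ℕ → V → Bool, ys 0 = (fun _ => true) ∧ ys m = x ∧
    ∀ k < m, ∃ i, ys k i = true ∧ nCount G (ys k) i false ≤ nCount G (ys k) i true ∧
      ys (k + 1) = Function.update (ys k) i false

/-- `‖x‖₁`: number of coordinates equal to `1`. -/
def norm1 [Fintype V] (x : V → Bool) : ℕ :=
  (Finset.univ.filter (fun v => x v = true)).card


lemma agreeFun_mk (x : V → Bool) (a b : V) :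
    agreeFun x s(a, b) = (x a == x b) := rfl

lemma agreeFun_congr (x y : V → Bool) (e : Sym2 V)
    (h : ∀ v ∈ e, x v = y v) : agreeFun x e = agreeFun y e := by
  induction e using Sym2.inductionOn with
  | hf a b =>
    rw [agreeFun_mk, agreeFun_mk, h a (Sym2.mem_mk_left a b), h b (Sym2.mem_mk_right a b)]

lemma card_incident [Fintype V] [DecidableEq V] (G : SimpleGraph V) [DecidableRel G.Adj]
    (x : V → Bool) (i : V) :
    ((G.edgeFinset.filter (fun e => agreeFun x e = true)).filter (fun e => i ∈ e)).card
      = ((G.neighborFinset i).filter (fun j => x j = x i)).card := by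
  symm
  apply Finset.card_bij (fun j _ => s(i, j))
  · intro j hj
    simp only [Finset.mem_filter, SimpleGraph.mem_neighborFinset] at hj
    refine Finset.mem_filter.mpr ⟨Finset.mem_filter.mpr ⟨?_, ?_⟩, Sym2.mem_mk_left i j⟩
    · exact SimpleGraph.mem_edgeFinset.mpr ((SimpleGraph.mem_edgeSet G).mpr hj.1)
    · rw [agreeFun_mk, hj.2]; simp
  · intro a ha b hb hab
    rw [Sym2.congr_right] at hab
    exact hab
  · intro e he
    simp only [Finset.mem_filter, SimpleGraph.mem_edgeFinset] at he
    induction e using Sym2.inductionOn with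
    | hf a b =>
      rcases Sym2.mem_iff.mp he.2 with rfl | rfl
      · refine ⟨b, ?_, rfl⟩
        simp only [Finset.mem_filter, SimpleGraph.mem_neighborFinset]
        refine ⟨(SimpleGraph.mem_edgeSet G).mp he.1.1, ?_⟩
        have := he.1.2
        rw [agreeFun_mk] at this
        exact (beq_iff_eq.mp this).symm
      · refine ⟨a, ?_, Sym2.eq_swap⟩
        simp only [Finset.mem_filter, SimpleGraph.mem_neighborFinset]
        refine ⟨((SimpleGraph.mem_edgeSet G).mp he.1.1).symm, ?_⟩
        have := he.1.2
        rw [agreeFun_mk] at this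
        exact beq_iff_eq.mp this

lemma nCount_congr [Fintype V] (G : SimpleGraph V) [DecidableRel G.Adj]
    (x y : V → Bool) (i : V) (a : Bool) (h : ∀ j ∈ G.neighborFinset i, x j = y j) :
    nCount G x i a = nCount G y i a := by
  unfold nCount
  congr 1
  apply Finset.filter_congr
  intro j hj
  simp [h j hj]

lemma phi_update_le [Fintype V] [DecidableEq V] (G : SimpleGraph V) [DecidableRel G.Adj]
    (x : V → Bool) (i : V) (hx : x i = false)
    (hn : nCount G x i false ≤ nCount G x i true) :
    Phi G x ≤ Phi G (Function.update x i true) := by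
  set y := Function.update x i true with hy
  have hnb : ∀ j ∈ G.neighborFinset i, x j = y j := by
    intro j hj
    simp only [SimpleGraph.mem_neighborFinset] at hj
    have hne : j ≠ i := by rintro rfl; exact G.irrefl hj
    simp [hy, Function.update_of_ne hne]
  have split : ∀ z : V → Bool,
      Phi G z = ((G.edgeFinset.filter (fun e => agreeFun z e = true)).filter
          (fun e => i ∈ e)).card +
        ((G.edgeFinset.filter (fun e => agreeFun z e = true)).filter
          (fun e => ¬ i ∈ e)).card := by
    intro z
    rw [Phi, ← Finset.card_filter_add_card_filter_not (fun e => i ∈ e)]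
  rw [split x, split y]
  have houtside : ((G.edgeFinset.filter (fun e => agreeFun x e = true)).filter
      (fun e => ¬ i ∈ e)).card = ((G.edgeFinset.filter (fun e => agreeFun y e = true)).filter
      (fun e => ¬ i ∈ e)).card := by
    have hc : ∀ z : V → Bool,
        (G.edgeFinset.filter (fun e => agreeFun z e = true)).filter (fun e => ¬ i ∈ e)
          = (G.edgeFinset.filter (fun e => ¬ i ∈ e)).filter
              (fun e => agreeFun z e = true) := fun z => Finset.filter_comm _ _ _
    rw [hc, hc]
    congr 1
    apply Finset.filter_congr
    intro e he
    simp only [Finset.mem_filter] at he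
    rw [agreeFun_congr x y e]
    intro v hv
    have : v ≠ i := fun h => he.2 (h ▸ hv)
    simp [hy, Function.update_of_ne this]
  rw [houtside]
  apply Nat.add_le_add_right
  rw [card_incident, card_incident]
  have hyi : y i = true := by simp [hy]
  rw [hx, hyi]
  calc ((G.neighborFinset i).filter (fun j => x j = false)).card
      = nCount G x i false := rfl
    _ ≤ nCount G x i true := hn
    _ = nCount G y i true := nCount_congr G x y i true hnb
    _ = ((G.neighborFinset i).filter (fun j => y j = true)).card := rfl

/-- removing from a valid control set a vertex whose `1`-neighbors are at
least its `0`-neighbors (in `1_C`) keeps the set valid. -/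
theorem validControlSet_erase [Fintype V] [DecidableEq V]
    (G : SimpleGraph V) [DecidableRel G.Adj] (C : Finset V) (i : V)
    (hi : i ∈ C) (hC : ValidControlSet G C)
    (hn : nCount G (fun v => decide (v ∈ C)) i false
            ≤ nCount G (fun v => decide (v ∈ C)) i true) :
    ValidControlSet G (C.erase i) := by
  obtain ⟨m, xs, ⟨h0, hm, hstep⟩, hphi⟩ := hC
  refine ⟨m + 1, fun k => if k = 0 then (fun v => decide (v ∈ C.erase i)) else xs (k - 1),
    ⟨by simp, by simp [hm], ?_⟩, ?_⟩
  · intro k hk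
    rcases Nat.eq_zero_or_pos k with rfl | hkpos
    · refine ⟨i, Finset.notMem_erase i C, by simp, ?_⟩
      simp only [Nat.one_ne_zero, if_neg, if_pos, reduceIte]
      rw [h0]
      funext v
      by_cases hv : v = i
      · subst hv; simp [hi]
      · simp [Function.update_of_ne hv, Finset.mem_erase, hv]
    · obtain ⟨k', rfl⟩ := Nat.exists_eq_add_of_lt hkpos
      rw [zero_add] at *
      obtain ⟨j, hjC, hj0, hj1⟩ := hstep k' (by omega)
      refine ⟨j, fun h => hjC (Finset.mem_of_mem_erase h), ?_, ?_⟩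
      · simpa using hj0
      · simpa using hj1
  · intro k hk
    rcases Nat.eq_zero_or_pos k with rfl | hkpos
    · simp only [reduceIte, Nat.one_ne_zero, if_neg, zero_add]
      rw [h0]
      have hCeq : (fun v => decide (v ∈ C)) =
          Function.update (fun v => decide (v ∈ C.erase i)) i true := by
        funext v
        by_cases hv : v = i
        · subst hv; simp [hi]
        · simp [Function.update_of_ne hv, Finset.mem_erase, hv]
      rw [hCeq]
      apply phi_update_le
      · simp
      · rw [nCount_congr G _ (fun v => decide (v ∈ C)) i false,
          nCount_congr G _ (fun v => decide (v ∈ C)) i true]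
        · exact hn
        all_goals
          intro j hj
          simp only [SimpleGraph.mem_neighborFinset] at hj
          have hne : j ≠ i := by rintro rfl; exact G.irrefl hj
          simp [Finset.mem_erase, hne]
    · obtain ⟨k', rfl⟩ := Nat.exists_eq_add_of_lt hkpos
      rw [zero_add] at *
      simpa using hphi k' (by omega)
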